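/- For 0 < q < 1, the series ζ(z) = Σ_{n=1}^∞ [n]_q^{-z} [2n]_q, where [n]_q = (q^n - q^{-n})/(q - q^{-1}), converges absolutely for every complex z with Re z > 2. -/

import Mathlib

set_option maxHeartbeats 1000000

/-- The q-number `[n]_q = (qⁿ - q⁻ⁿ)/(q - q⁻¹)`. -/
noncomputable def qnum (q : ℝ) (n : ℕ) : ℝ := (q ^ (n : ℤ) - q ^ (-(n : ℤ))) / (q - q⁻¹)

lemma qnum_eq (q : ℝ) (n : ℕ) :
    qnum q n = ((q ^ n)⁻¹ - q ^ n) / (q⁻¹ - q) := by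
  have h : (q : ℝ) ^ (-(n : ℤ)) = (q ^ n)⁻¹ := by rw [zpow_neg, zpow_natCast]
  rw [qnum, zpow_natCast, h, ← neg_div_neg_eq]
  ring_nf

lemma inv_sub_pos (q : ℝ) (hq0 : 0 < q) (hq1 : q < 1) : 0 < q⁻¹ - q := by
  have hqi : q⁻¹ * q = 1 := inv_mul_cancel₀ (ne_of_gt hq0)
  nlinarith [inv_pos.mpr hq0]

lemma qnum_lower (q : ℝ) (hq0 : 0 < q) (hq1 : q < 1) (n : ℕ) (hn : 1 ≤ n) :
    (1 - q ^ 2) / (q⁻¹ - q) * (q ^ n)⁻¹ ≤ qnum q n := by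
  have hd := inv_sub_pos q hq0 hq1
  rw [qnum_eq q, div_mul_eq_mul_div, div_le_div_iff_of_pos_right hd]
  have hpow : q ^ (n : ℤ) ≤ q ^ (2 - n : ℤ) :=
    zpow_le_zpow_right_of_le_one₀ hq0 (le_of_lt hq1) (by omega)
  rw [zpow_natCast] at hpow
  have h2 : q ^ (2 - n : ℤ) = q ^ 2 * (q ^ n)⁻¹ := by
    rw [zpow_sub₀ (ne_of_gt hq0), zpow_natCast, zpow_two]
    ring
  rw [h2] at hpow
  nlinarith [pow_pos hq0 n, inv_pos.mpr (pow_pos hq0 n)]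

lemma qnum_upper (q : ℝ) (hq0 : 0 < q) (hq1 : q < 1) (n : ℕ) :
    qnum q n ≤ (q⁻¹ - q)⁻¹ * (q ^ n)⁻¹ := by
  have hd := inv_sub_pos q hq0 hq1
  rw [qnum_eq q, div_eq_mul_inv, mul_comm ((q⁻¹ - q)⁻¹)]
  apply mul_le_mul_of_nonneg_right _ (le_of_lt (inv_pos.mpr hd))
  nlinarith [pow_pos hq0 n]

lemma comb_eq (q L U s : ℝ) (hq : 0 < q) (n : ℕ) :
    L ^ (-s) * ((q ^ (n + 1))⁻¹) ^ (-s) * (U * (q ^ (2 * (n + 1)))⁻¹)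
      = (L ^ (-s) * U) * (q ^ (s - 2)) ^ (n + 1) := by
  have hinv : ∀ m : ℕ, ((q ^ m)⁻¹ : ℝ) = q ^ (-(m : ℝ)) := fun m => by
    rw [← Real.rpow_natCast q m, ← Real.rpow_neg hq.le]
  rw [hinv, hinv, ← Real.rpow_mul hq.le, ← Real.rpow_natCast (q ^ (s - 2)) (n + 1),
    ← Real.rpow_mul hq.le]
  have h : q ^ (-((n + 1 : ℕ) : ℝ) * (-s)) * (U * q ^ (-((2 * (n + 1) : ℕ) : ℝ)))
      = U * q ^ ((s - 2) * ((n + 1 : ℕ) : ℝ)) := by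
    rw [mul_left_comm, ← Real.rpow_add hq]
    congr 1
    push_cast; ring
  rw [mul_assoc, h, mul_assoc]

/-- For `0 < q < 1`, the series `ζ(z) = Σ_{n≥1} [n]_q^{-z} [2n]_q` converges absolutely
for every complex `z` with `Re z > 2`. -/
theorem stmt1 (q : ℝ) (hq0 : 0 < q) (hq1 : q < 1) (z : ℂ) (hz : 2 < z.re) :
    Summable (fun n : ℕ =>
      ‖((qnum q (n + 1) : ℂ)) ^ (-z) * ((qnum q (2 * (n + 1)) : ℂ))‖) := by
  have hd := inv_sub_pos q hq0 hq1
  set s := z.re with hs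
  have hq2 : (0:ℝ) < 1 - q ^ 2 := by nlinarith
  set L : ℝ := (1 - q ^ 2) / (q⁻¹ - q) with hL
  set U : ℝ := (q⁻¹ - q)⁻¹ with hU
  have hLpos : 0 < L := div_pos hq2 hd
  have hUpos : 0 < U := inv_pos.mpr hd
  set C : ℝ := L ^ (-s) * U with hC
  set r : ℝ := q ^ (s - 2) with hr
  have hrpos : 0 < r := Real.rpow_pos_of_pos hq0 _
  have hrlt : r < 1 := Real.rpow_lt_one (le_of_lt hq0) hq1 (by linarith)
  have key : ∀ n : ℕ,
      ‖((qnum q (n + 1) : ℂ)) ^ (-z) * ((qnum q (2 * (n + 1)) : ℂ))‖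
        ≤ C * r ^ (n + 1) := by
    intro n
    have hapos : 0 < qnum q (n + 1) :=
      lt_of_lt_of_le (mul_pos hLpos (inv_pos.mpr (pow_pos hq0 _)))
        (qnum_lower q hq0 hq1 (n+1) (by omega))
    have hbpos : 0 < qnum q (2 * (n + 1)) :=
      lt_of_lt_of_le (mul_pos hLpos (inv_pos.mpr (pow_pos hq0 _)))
        (qnum_lower q hq0 hq1 (2*(n+1)) (by omega))
    rw [norm_mul, Complex.norm_cpow_eq_rpow_re_of_pos hapos,
      Complex.norm_of_nonneg hbpos.le]
    have h1 : qnum q (n+1) ^ (-z).re ≤ (L * (q ^ (n+1))⁻¹) ^ (-s) := by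
      apply Real.rpow_le_rpow_of_nonpos (mul_pos hLpos (inv_pos.mpr (pow_pos hq0 _)))
        (qnum_lower q hq0 hq1 (n+1) (by omega))
      simp only [Complex.neg_re, ← hs]
      linarith
    have h2 : qnum q (2*(n+1)) ≤ U * (q ^ (2*(n+1)))⁻¹ := qnum_upper q hq0 hq1 _
    calc qnum q (n+1) ^ (-z).re * qnum q (2*(n+1))
        ≤ (L * (q ^ (n+1))⁻¹) ^ (-s) * (U * (q ^ (2*(n+1)))⁻¹) := by
          apply mul_le_mul h1 h2 (le_of_lt hbpos)
          exact le_of_lt (Real.rpow_pos_of_pos (mul_pos hLpos (inv_pos.mpr (pow_pos hq0 _))) _)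
      _ = C * r ^ (n + 1) := by
          rw [Real.mul_rpow (le_of_lt hLpos) (le_of_lt (inv_pos.mpr (pow_pos hq0 _)))]
          exact comb_eq q L U s hq0 n
  apply Summable.of_nonneg_of_le (fun n => norm_nonneg _) key
  have hsum : Summable (fun n : ℕ => C * r ^ n) :=
    (summable_geometric_of_lt_one (le_of_lt hrpos) hrlt).mul_left C
  exact (summable_nat_add_iff 1).mpr hsum
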